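/- Let φ ∈ C₋ and x ∈ ℚ_p^n \ {0}. Then there exists a compact open subgroup Λ₀ of (ℚ_p^n, +) such that for every compact open subgroup Λ of (ℚ_p^n, +) with Λ ⊇ Λ₀, one has ∫_Λ ψ(ξ·x) φ(ξ) dμ(ξ) = ∫_{Λ₀} ψ(ξ·x) φ(ξ) dμ(ξ) (all these integrals converge absolutely). -/

import Mathlib

open MeasureTheory
open scoped MatrixGroups

noncomputable section

/-- The action of `g ∈ GL_n(ℤ_p)` on `ℚ_p^n` by matrix multiplication. -/
def glAct (p : ℕ) [Fact p.Prime] (n : ℕ) (g : GL (Fin n) ℤ_[p]) (ξ : Fin n → ℚ_[p]) :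
    Fin n → ℚ_[p] :=
  Matrix.mulVec (Matrix.of fun i j => (((g : Matrix (Fin n) (Fin n) ℤ_[p]) i j : ℚ_[p]))) ξ

/-- `φ` is `K`-finite for `K = GL_n(ℤ_p)`. -/
def KFinite (p : ℕ) [Fact p.Prime] (n : ℕ) (φ : (Fin n → ℚ_[p]) → ℂ) : Prop :=
  FiniteDimensional ℂ
    (Submodule.span ℂ
      (Set.range fun g : GL (Fin n) ℤ_[p] =>
        fun ξ : Fin n → ℚ_[p] => φ (glAct p n g⁻¹ ξ)))

/-- `φ` is locally constant on `ℚ_p^n \ {0}`. -/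
def LocConstOff0 (p : ℕ) [Fact p.Prime] (n : ℕ) (φ : (Fin n → ℚ_[p]) → ℂ) : Prop :=
  ∀ ξ : Fin n → ℚ_[p], ξ ≠ 0 → ∃ U ∈ nhds ξ, ∀ η ∈ U, φ η = φ ξ

/-- The space `C`, encoded as functions on `ℚ_p^n` vanishing at `0`. -/
def Cspace (p : ℕ) [Fact p.Prime] (n : ℕ) : Set ((Fin n → ℚ_[p]) → ℂ) :=
  {φ | φ 0 = 0 ∧ LocConstOff0 p n φ ∧ KFinite p n φ}

/-- `C₋`: members of `C` supported away from `0`. -/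
def Cminus (p : ℕ) [Fact p.Prime] (n : ℕ) : Set ((Fin n → ℚ_[p]) → ℂ) :=
  {φ ∈ Cspace p n | ∃ ε > (0 : ℝ), ∀ ξ : Fin n → ℚ_[p], ‖ξ‖ < ε → φ ξ = 0}

/-- `ψ` is an additive character of `ℚ_p`, trivial on `ℤ_p` but not on `p⁻¹ℤ_p`. -/
def IsStdAddChar (p : ℕ) [Fact p.Prime] (ψ : ℚ_[p] → ℂ) : Prop :=
  (∀ a b : ℚ_[p], ψ (a + b) = ψ a * ψ b) ∧
  (∀ a : ℚ_[p], ‖ψ a‖ = 1) ∧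
  (∀ z : ℚ_[p], ‖z‖ ≤ 1 → ψ z = 1) ∧
  (∃ y : ℚ_[p], ‖y‖ = (p : ℝ) ∧ ψ y ≠ 1)

lemma exists_eval_points {X : Type*} :
    ∀ (k : ℕ) (W : Submodule ℂ (X → ℂ)), FiniteDimensional ℂ W → Module.finrank ℂ W ≤ k →
      ∃ P : Finset X, ∀ f ∈ W, (∀ ξ ∈ P, f ξ = 0) → f = 0 := by
  classical
  intro k
  induction k with
  | zero =>
    intro W hW hr
    refine ⟨∅, fun f hf _ => ?_⟩
    have hbot : W = ⊥ := Submodule.finrank_eq_zero.mp (Nat.le_zero.mp hr)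
    simpa [hbot] using hf
  | succ k ih =>
    intro W hW hr
    by_cases hbot : W = ⊥
    · exact ⟨∅, fun f hf _ => by simpa [hbot] using hf⟩
    · obtain ⟨f₀, hf₀W, hf₀⟩ := Submodule.ne_bot_iff W |>.mp hbot
      obtain ⟨ξ₀, hξ₀⟩ : ∃ ξ₀, f₀ ξ₀ ≠ 0 := by
        by_contra h
        push_neg at h
        exact hf₀ (funext h)
      set W' : Submodule ℂ (X → ℂ) := W ⊓ LinearMap.ker (LinearMap.proj (R := ℂ) ξ₀) with hW'
      haveI : FiniteDimensional ℂ W := hW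
      haveI hW'fd : FiniteDimensional ℂ W' := Submodule.finiteDimensional_of_le inf_le_left
      have hlt : W' < W := by
        refine lt_of_le_of_ne inf_le_left fun h => ?_
        have : f₀ ∈ W' := h ▸ hf₀W
        exact hξ₀ this.2
      have hrk : Module.finrank ℂ W' ≤ k :=
        Nat.lt_succ_iff.mp (lt_of_lt_of_le (Submodule.finrank_lt_finrank_of_lt hlt) hr)
      obtain ⟨P', hP'⟩ := ih W' hW'fd hrk
      refine ⟨insert ξ₀ P', fun f hf hz => ?_⟩
      have hfW' : f ∈ W' := ⟨hf, hz ξ₀ (Finset.mem_insert_self _ _)⟩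
      exact hP' f hfW' fun ξ hξ => hz ξ (Finset.mem_insert_of_mem hξ)

lemma finset_delta {X : Type*} [SeminormedAddCommGroup X] (φ : X → ℂ)
    (hcont : ∀ ξ : X, ∃ δ > (0:ℝ), ∀ η, ‖η - ξ‖ < δ → φ η = φ ξ) (P : Finset X) :
    ∃ δ > (0:ℝ), ∀ ξ ∈ P, ∀ η, ‖η - ξ‖ < δ → φ η = φ ξ := by
  classical
  induction P using Finset.induction with
  | empty => exact ⟨1, one_pos, by simp⟩
  | @insert a P ha ih =>
    obtain ⟨δ, δpos, hδ⟩ := ih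
    obtain ⟨δ', δ'pos, hδ'⟩ := hcont a
    refine ⟨min δ δ', lt_min δpos δ'pos, fun ξ hξ η hη => ?_⟩
    rcases Finset.mem_insert.mp hξ with rfl | hξ
    · exact hδ' η (lt_of_lt_of_le hη (min_le_right _ _))
    · exact hδ ξ hξ η (lt_of_lt_of_le hη (min_le_left _ _))

lemma one_add_norm (p : ℕ) [Fact p.Prime] (lam : ℤ_[p]) (h : ‖lam‖ < 1) :
    ‖(1 + lam : ℤ_[p])‖ = 1 := by
  have hne : ‖(1:ℤ_[p])‖ ≠ ‖lam‖ := by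
    rw [norm_one]; exact fun hc => absurd h (by rw [← hc]; exact lt_irrefl _)
  rw [IsUltrametricDist.norm_add_eq_max_of_norm_ne_norm hne, norm_one]
  exact max_eq_left h.le

lemma prod_one_right (p : ℕ) [Fact p.Prime] (n : ℕ) (t lam : ℤ_[p]) (A : Matrix (Fin n) (Fin n) ℤ_[p])
    (hAA : A * A = lam • A) (htt : (1 + lam) * t = 1) : (1 + A) * (1 - t • A) = 1 := by
  rw [mul_sub, mul_one, add_mul, one_mul, mul_smul_comm, hAA, smul_smul]
  have h1 : t • A + (t * lam) • A = A := by
    rw [← add_smul, show t + t * lam = 1 by linear_combination htt, one_smul]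
  rw [h1, add_sub_cancel_right]

lemma prod_one_left (p : ℕ) [Fact p.Prime] (n : ℕ) (t lam : ℤ_[p]) (A : Matrix (Fin n) (Fin n) ℤ_[p])
    (hAA : A * A = lam • A) (htt : (1 + lam) * t = 1) : (1 - t • A) * (1 + A) = 1 := by
  rw [sub_mul, one_mul, mul_add, mul_one, smul_mul_assoc, hAA, smul_smul]
  have h1 : t • A + (t * lam) • A = A := by
    rw [← add_smul, show t + t * lam = 1 by linear_combination htt, one_smul]
  rw [h1, add_sub_cancel_right]

lemma glAct_eq (p : ℕ) [Fact p.Prime] (n : ℕ) (g : GL (Fin n) ℤ_[p]) (ξ : Fin n → ℚ_[p]) :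
    glAct p n g ξ =
      ((PadicInt.Coe.ringHom (p := p)).mapMatrix (g : Matrix (Fin n) (Fin n) ℤ_[p])).mulVec ξ :=
  rfl

lemma glAct_one (p : ℕ) [Fact p.Prime] (n : ℕ) (ξ : Fin n → ℚ_[p]) :
    glAct p n 1 ξ = ξ := by
  rw [glAct_eq]; simp [Matrix.one_mulVec]

lemma glAct_comp (p : ℕ) [Fact p.Prime] (n : ℕ) (g h : GL (Fin n) ℤ_[p]) (ξ : Fin n → ℚ_[p]) :
    glAct p n g (glAct p n h ξ) = glAct p n (g * h) ξ := by
  rw [glAct_eq, glAct_eq, glAct_eq, Matrix.mulVec_mulVec, ← map_mul, Units.val_mul]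

lemma key_invariance (p : ℕ) [Fact p.Prime] (n : ℕ) (hn : 2 ≤ n)
    (φ : (Fin n → ℚ_[p]) → ℂ) (hKF : KFinite p n φ)
    (hcont : ∀ ξ : Fin n → ℚ_[p], ∃ δ > (0:ℝ), ∀ η, ‖η - ξ‖ < δ → φ η = φ ξ) :
    ∃ ε > (0:ℝ), ∀ ξ η : Fin n → ℚ_[p], ξ ≠ 0 → ‖η‖ ≤ ε * ‖ξ‖ → ‖η‖ < ‖ξ‖ →
      φ (ξ + η) = φ ξ := by
  classical
  haveI : Nonempty (Fin n) := ⟨⟨0, by omega⟩⟩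
  set V : Submodule ℂ ((Fin n → ℚ_[p]) → ℂ) :=
    Submodule.span ℂ (Set.range fun g : GL (Fin n) ℤ_[p] =>
      fun ξ : Fin n → ℚ_[p] => φ (glAct p n g⁻¹ ξ)) with hV
  haveI hVfd : FiniteDimensional ℂ V := hKF
  obtain ⟨P, hP⟩ := exists_eval_points (Module.finrank ℂ V) V hVfd le_rfl
  obtain ⟨δ, δpos, hδ⟩ := finset_delta φ hcont P
  obtain ⟨R₀, hR₀⟩ := (P.image fun ζ : Fin n → ℚ_[p] => ‖ζ‖).exists_le
  set R : ℝ := max R₀ 1 with hRdef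
  have hR1 : (1:ℝ) ≤ R := le_max_right _ _
  have hRpos : (0:ℝ) < R := lt_of_lt_of_le one_pos hR1
  have hRP : ∀ ζ ∈ P, ‖ζ‖ ≤ R := fun ζ hζ =>
    le_trans (hR₀ _ (Finset.mem_image_of_mem _ hζ)) (le_max_left _ _)
  set ε : ℝ := δ / ((n + 1) * R) with hεdef
  have εpos : 0 < ε := div_pos δpos (by positivity)
  refine ⟨ε, εpos, ?_⟩
  have h_inv : ∀ u : GL (Fin n) ℤ_[p],
      (∀ i j, ‖((((u⁻¹ : GL (Fin n) ℤ_[p]) : Matrix (Fin n) (Fin n) ℤ_[p]) i j : ℚ_[p])) -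
        (1 : Matrix (Fin n) (Fin n) ℚ_[p]) i j‖ ≤ ε) →
      ∀ ζ : Fin n → ℚ_[p], φ (glAct p n u⁻¹ ζ) = φ ζ := by
    intro u hu ζ
    have hmemu : (fun ζ : Fin n → ℚ_[p] => φ (glAct p n u⁻¹ ζ)) ∈ V :=
      Submodule.subset_span ⟨u, rfl⟩
    have hmem1 : φ ∈ V := by
      have h1 : (fun ξ : Fin n → ℚ_[p] => φ (glAct p n (1 : GL (Fin n) ℤ_[p])⁻¹ ξ)) ∈ V :=
        Submodule.subset_span ⟨1, rfl⟩
      simpa [inv_one, glAct_one] using h1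
    have hsubm : (fun ζ : Fin n → ℚ_[p] => φ (glAct p n u⁻¹ ζ)) - φ ∈ V := sub_mem hmemu hmem1
    have hvanish : ∀ ζ₀ ∈ P, ((fun ζ : Fin n → ℚ_[p] => φ (glAct p n u⁻¹ ζ)) - φ) ζ₀ = 0 := by
      intro ζ₀ hζ₀
      have hclose : ‖glAct p n u⁻¹ ζ₀ - ζ₀‖ < δ := by
        have hbd : ∀ i, ‖(glAct p n u⁻¹ ζ₀ - ζ₀) i‖ ≤ (n : ℝ) * (ε * R) := by
          intro i
          have hco : (glAct p n u⁻¹ ζ₀ - ζ₀) i =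
              ∑ j, (((((u⁻¹ : GL (Fin n) ℤ_[p]) : Matrix (Fin n) (Fin n) ℤ_[p]) i j : ℚ_[p])) -
                (1 : Matrix (Fin n) (Fin n) ℚ_[p]) i j) * ζ₀ j := by
            rw [Pi.sub_apply, glAct_eq]
            simp only [Matrix.mulVec, dotProduct, RingHom.mapMatrix_apply,
              Matrix.map_apply, PadicInt.Coe.ringHom, RingHom.coe_mk, MonoidHom.coe_mk,
              OneHom.coe_mk, sub_mul, Finset.sum_sub_distrib]
            congr 1
            simp [Matrix.one_apply, ite_mul, one_mul, zero_mul, Finset.sum_ite_eq]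
          rw [hco]
          refine le_trans (norm_sum_le _ _) ?_
          have : ∀ j, ‖(((((u⁻¹ : GL (Fin n) ℤ_[p]) : Matrix (Fin n) (Fin n) ℤ_[p]) i j : ℚ_[p])) -
                (1 : Matrix (Fin n) (Fin n) ℚ_[p]) i j) * ζ₀ j‖ ≤ ε * R := by
            intro j
            rw [norm_mul]
            exact mul_le_mul (hu i j) (le_trans (norm_le_pi_norm ζ₀ j) (hRP ζ₀ hζ₀))
              (norm_nonneg _) (le_of_lt εpos)
          refine le_trans (Finset.sum_le_sum fun j _ => this j) ?_
          simp [Finset.sum_const, Finset.card_univ]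
        have hlt : (n : ℝ) * (ε * R) < δ := by
          have hεR : ε * R = δ / (n + 1) := by
            rw [hεdef]; field_simp
          rw [hεR, mul_div_assoc', div_lt_iff₀ (by positivity : (0:ℝ) < (n:ℝ) + 1)]
          nlinarith [δpos]
        exact lt_of_le_of_lt ((pi_norm_le_iff_of_nonneg (by positivity)).mpr hbd) hlt
      have := hδ ζ₀ hζ₀ (glAct p n u⁻¹ ζ₀) hclose
      simpa [sub_eq_zero] using this
    have hzero := hP _ hsubm hvanish
    have := congrFun hzero ζ
    simpa [sub_eq_zero] using this
  intro ξ η hξ hle hlt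
  have hξn : (0:ℝ) < ‖ξ‖ := norm_pos_iff.mpr hξ
  obtain ⟨j₀, -, hj₀'⟩ := Finset.exists_mem_eq_sup (Finset.univ) Finset.univ_nonempty
    (fun i => ‖ξ i‖₊)
  have hj₀ : ‖ξ‖ = ‖ξ j₀‖ := by rw [Pi.norm_def, hj₀']; rfl
  have hξj : ξ j₀ ≠ 0 := by
    intro h; rw [hj₀, h, norm_zero] at hξn; exact lt_irrefl _ hξn
  set a : Fin n → ℚ_[p] := fun i => η i / ξ j₀ with ha
  have hanorm : ∀ i, ‖a i‖ ≤ ‖η‖ / ‖ξ‖ := by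
    intro i
    rw [ha]
    show ‖η i / ξ j₀‖ ≤ ‖η‖ / ‖ξ‖
    rw [norm_div, hj₀]
    exact (div_le_div_iff_of_pos_right (by rw [← hj₀]; exact hξn)).mpr (norm_le_pi_norm η i)
  have hdiva : ‖η‖ / ‖ξ‖ ≤ ε := (div_le_iff₀ hξn).mpr hle
  have hdiv1 : ‖η‖ / ‖ξ‖ < 1 := (div_lt_one hξn).mpr hlt
  have ha1 : ∀ i, ‖a i‖ ≤ 1 := fun i => le_of_lt (lt_of_le_of_lt (hanorm i) hdiv1)
  set aZ : Fin n → ℤ_[p] := fun i => ⟨a i, ha1 i⟩ with haZ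
  set A : Matrix (Fin n) (Fin n) ℤ_[p] := Matrix.of fun i j => if j = j₀ then aZ i else 0 with hA
  set lam : ℤ_[p] := aZ j₀ with hlam
  have haZnorm : ∀ i, ‖aZ i‖ = ‖a i‖ := fun i => rfl
  have hlamnorm : ‖lam‖ < 1 := by
    rw [hlam, haZnorm]; exact lt_of_le_of_lt (hanorm j₀) hdiv1
  have hAA : A * A = lam • A := by
    ext i k
    simp only [hA, Matrix.mul_apply, Matrix.smul_apply, Matrix.of_apply, ite_mul, zero_mul,
      mul_ite, mul_zero, smul_eq_mul, Finset.sum_ite_eq', Finset.mem_univ, if_true]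
    by_cases hk : k = j₀
    · simp only [hk, if_true]
      rw [Finset.sum_ite_eq' Finset.univ j₀ (fun x => aZ i * aZ x)]
      simp [hlam]; ring
    · simp [hk]
  have h1lam : ‖(1 + lam : ℤ_[p])‖ = 1 := one_add_norm p lam hlamnorm
  obtain ⟨v, hv⟩ := PadicInt.isUnit_iff.mpr h1lam
  set t : ℤ_[p] := ↑v⁻¹ with ht
  have htt : (1 + lam) * t = 1 := by rw [← hv, ht]; exact v.mul_inv
  set u : GL (Fin n) ℤ_[p] :=
    ⟨1 + A, 1 - t • A, prod_one_right p n t lam A hAA htt, prod_one_left p n t lam A hAA htt⟩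
    with hudef
  have huinv : ((u⁻¹ : GL (Fin n) ℤ_[p]) : Matrix (Fin n) (Fin n) ℤ_[p]) = 1 - t • A := rfl
  have hubound : ∀ i j, ‖((((u⁻¹ : GL (Fin n) ℤ_[p]) : Matrix (Fin n) (Fin n) ℤ_[p]) i j : ℚ_[p])) -
      (1 : Matrix (Fin n) (Fin n) ℚ_[p]) i j‖ ≤ ε := by
    intro i j
    rw [huinv]
    have h1 : ((1 - t • A : Matrix (Fin n) (Fin n) ℤ_[p]) i j) =
        (1 : Matrix (Fin n) (Fin n) ℤ_[p]) i j - t * A i j := by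
      simp [Matrix.sub_apply, Matrix.smul_apply, smul_eq_mul]
    rw [h1]
    have h2 : (((1 : Matrix (Fin n) (Fin n) ℤ_[p]) i j : ℚ_[p])) =
        (1 : Matrix (Fin n) (Fin n) ℚ_[p]) i j := by
      by_cases hij : i = j <;> simp [Matrix.one_apply, hij]
    push_cast
    rw [h2, sub_sub_cancel_left, norm_neg]
    have hT : ‖(t : ℚ_[p])‖ ≤ 1 := t.2
    have hAij : ‖((A i j : ℤ_[p]) : ℚ_[p])‖ ≤ ε := by
      rw [hA]
      by_cases hj : j = j₀
      · simp only [Matrix.of_apply, hj, if_true]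
        show ‖a i‖ ≤ ε
        exact le_trans (hanorm i) hdiva
      · simp only [Matrix.of_apply, hj, if_false]
        simpa using le_of_lt εpos
    calc ‖(t : ℚ_[p]) * ((A i j : ℤ_[p]) : ℚ_[p])‖
        = ‖(t : ℚ_[p])‖ * ‖((A i j : ℤ_[p]) : ℚ_[p])‖ := norm_mul _ _
      _ ≤ 1 * ε := mul_le_mul hT hAij (norm_nonneg _) one_pos.le
      _ = ε := one_mul ε
  have hfix := h_inv u hubound
  have hact : glAct p n u ξ = ξ + η := by
    funext i
    rw [glAct_eq]
    have hval : (u : Matrix (Fin n) (Fin n) ℤ_[p]) = 1 + A := rfl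
    rw [hval]
    simp only [Matrix.mulVec, dotProduct, RingHom.mapMatrix_apply, Matrix.map_apply,
      Matrix.add_apply, Matrix.one_apply, hA, Matrix.of_apply, map_add, add_mul, Pi.add_apply,
      Finset.sum_add_distrib]
    congr 1
    · have h3 : ∀ x, (PadicInt.Coe.ringHom (p := p) (if i = x then 1 else 0)) * ξ x =
          if i = x then ξ x else 0 := by intro x; split_ifs <;> simp
      rw [Finset.sum_congr rfl fun x _ => h3 x, Finset.sum_ite_eq Finset.univ i]
      simp
    · have h3 : ∀ x, (PadicInt.Coe.ringHom (p := p) (if x = j₀ then aZ i else 0)) * ξ x =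
          if x = j₀ then a i * ξ x else 0 := by
        intro x; split_ifs <;> simp [haZ]
        · left; rfl
      rw [Finset.sum_congr rfl fun x _ => h3 x, Finset.sum_ite_eq' Finset.univ j₀]
      simp [ha, div_mul_cancel₀ _ hξj]
  have hback : glAct p n u⁻¹ (ξ + η) = ξ := by
    rw [← hact, glAct_comp, inv_mul_cancel, glAct_one]
  have h2 := hfix (ξ + η)
  rw [hback] at h2
  exact h2.symm

theorem stmt_4 (p : ℕ) [Fact p.Prime] (n : ℕ) (hn : 2 ≤ n)
    [MeasurableSpace ℚ_[p]] [BorelSpace ℚ_[p]]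
    (μ : Measure (Fin n → ℚ_[p])) [μ.IsAddHaarMeasure]
    (hμ : μ (Metric.closedBall 0 1) = 1)
    (ψ : ℚ_[p] → ℂ) (hψ : IsStdAddChar p ψ)
    (φ : (Fin n → ℚ_[p]) → ℂ) (hφ : φ ∈ Cminus p n)
    (x : Fin n → ℚ_[p]) (hx : x ≠ 0) :
    ∃ Λ₀ : AddSubgroup (Fin n → ℚ_[p]),
      IsCompact (Λ₀ : Set (Fin n → ℚ_[p])) ∧ IsOpen (Λ₀ : Set (Fin n → ℚ_[p])) ∧
      IntegrableOn (fun ξ : Fin n → ℚ_[p] => ψ (∑ i, ξ i * x i) * φ ξ)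
        (Λ₀ : Set (Fin n → ℚ_[p])) μ ∧
      ∀ Λ : AddSubgroup (Fin n → ℚ_[p]),
        IsCompact (Λ : Set (Fin n → ℚ_[p])) → IsOpen (Λ : Set (Fin n → ℚ_[p])) → Λ₀ ≤ Λ →
          IntegrableOn (fun ξ : Fin n → ℚ_[p] => ψ (∑ i, ξ i * x i) * φ ξ)
            (Λ : Set (Fin n → ℚ_[p])) μ ∧
          ∫ ξ in (Λ : Set (Fin n → ℚ_[p])), ψ (∑ i, ξ i * x i) * φ ξ ∂μ =
            ∫ ξ in (Λ₀ : Set (Fin n → ℚ_[p])), ψ (∑ i, ξ i * x i) * φ ξ ∂μ := by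
  classical
  obtain ⟨⟨φ0, hlc, hKF⟩, ε₀, ε₀pos, hsupp⟩ := hφ
  obtain ⟨ψadd, ψabs, ψtriv, y, hy, hyne⟩ := hψ
  haveI : Nonempty (Fin n) := ⟨⟨0, by omega⟩⟩
  have hcont : ∀ ξ : Fin n → ℚ_[p], ∃ δ > (0:ℝ), ∀ η, ‖η - ξ‖ < δ → φ η = φ ξ := by
    intro ξ
    by_cases hξ : ξ = 0
    · subst hξ
      exact ⟨ε₀, ε₀pos, fun η hη => by rw [φ0, hsupp η (by simpa using hη)]⟩
    · obtain ⟨U, hU, hUc⟩ := hlc ξ hξ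
      obtain ⟨δ, δpos, hδ⟩ := Metric.mem_nhds_iff.mp hU
      exact ⟨δ, δpos, fun η hη => hUc η (hδ (by rwa [Metric.mem_ball, dist_eq_norm]))⟩
  have hφc : Continuous φ := by
    rw [continuous_iff_continuousAt]
    intro ξ
    obtain ⟨δ, δpos, hδ⟩ := hcont ξ
    exact Filter.EventuallyEq.continuousAt (Metric.eventually_nhds_iff.mpr
      ⟨δ, δpos, fun {η} hη => hδ η (by rwa [← dist_eq_norm])⟩)
  have hψc : Continuous ψ := by
    rw [continuous_iff_continuousAt]
    intro a
    have hev : ∀ᶠ b in nhds a, ψ b = ψ a := by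
      refine Metric.eventually_nhds_iff.mpr ⟨1, one_pos, fun {b} hb => ?_⟩
      have h1 : ψ (a + (b - a)) = ψ a * ψ (b - a) := ψadd a (b - a)
      have h0 : a + (b - a) = b := by ring
      rw [h0] at h1
      rw [h1, ψtriv (b - a) (by rw [← dist_eq_norm]; exact hb.le), mul_one]
    exact Filter.EventuallyEq.continuousAt hev
  set f : (Fin n → ℚ_[p]) → ℂ := fun ξ => ψ (∑ i, ξ i * x i) * φ ξ with hf
  have hfc : Continuous f :=
    (hψc.comp (continuous_finset_sum _ fun i _ =>
      (continuous_apply i).mul continuous_const)).mul hφc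
  obtain ⟨ε, εpos, hinv⟩ := key_invariance p n hn φ hKF hcont
  have hxn : (0:ℝ) < ‖x‖ := norm_pos_iff.mpr hx
  obtain ⟨i₀, -, hi₀'⟩ := Finset.exists_mem_eq_sup Finset.univ Finset.univ_nonempty
    (fun i => ‖x i‖₊)
  have hi₀ : ‖x‖ = ‖x i₀‖ := by rw [Pi.norm_def, hi₀']; rfl
  have hxi : x i₀ ≠ 0 := fun h => by rw [hi₀, h, norm_zero] at hxn; exact lt_irrefl _ hxn
  set η₀ : Fin n → ℚ_[p] := fun i => if i = i₀ then y / x i₀ else 0 with hη₀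
  have hη₀n : ‖η₀‖ ≤ (p : ℝ) / ‖x‖ := by
    refine (pi_norm_le_iff_of_nonneg (by positivity)).mpr fun i => ?_
    rw [hη₀]
    dsimp only
    split_ifs with h
    · rw [norm_div, hy, hi₀]
    · rw [norm_zero]; positivity
  have hsum₀ : ∑ i, η₀ i * x i = y := by
    have h3 : ∀ i, η₀ i * x i = if i = i₀ then (y / x i₀) * x i else 0 := by
      intro i; rw [hη₀]; dsimp only; split_ifs <;> simp
    rw [Finset.sum_congr rfl fun i _ => h3 i, Finset.sum_ite_eq' Finset.univ i₀,
      if_pos (Finset.mem_univ i₀), div_mul_cancel₀ _ hxi]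
  set r : ℝ := max ((p:ℝ)/‖x‖) (((p:ℝ)/‖x‖)/ε) with hr
  have hppos : (0:ℝ) < (p:ℝ)/‖x‖ := by
    have : (0:ℝ) < (p:ℝ) := by exact_mod_cast (Fact.out : p.Prime).pos
    positivity
  have hrpos : 0 < r := lt_of_lt_of_le hppos (le_max_left _ _)
  have hη₀r : ‖η₀‖ ≤ r := le_trans hη₀n (le_max_left _ _)
  have hη₀εr : ‖η₀‖ ≤ ε * r := by
    refine le_trans hη₀n ?_
    calc (p:ℝ)/‖x‖ = ε * (((p:ℝ)/‖x‖)/ε) := by field_simp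
      _ ≤ ε * r := by
          have := le_max_right ((p:ℝ)/‖x‖) (((p:ℝ)/‖x‖)/ε)
          rw [← hr] at this
          exact mul_le_mul_of_nonneg_left this εpos.le
  set Λ₀ : AddSubgroup (Fin n → ℚ_[p]) :=
    { carrier := Metric.closedBall 0 r
      add_mem' := by
        intro a b ha hb
        have ha' : ‖a‖ ≤ r := by rwa [← mem_closedBall_zero_iff]
        have hb' : ‖b‖ ≤ r := by rwa [← mem_closedBall_zero_iff]
        show a + b ∈ Metric.closedBall 0 r
        rw [mem_closedBall_zero_iff]
        refine (pi_norm_le_iff_of_nonneg hrpos.le).mpr fun i => ?_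
        exact le_trans (Padic.nonarchimedean _ _)
          (max_le (le_trans (norm_le_pi_norm a i) ha') (le_trans (norm_le_pi_norm b i) hb'))
      zero_mem' := by
        show (0 : Fin n → ℚ_[p]) ∈ Metric.closedBall 0 r
        simpa using hrpos.le
      neg_mem' := by
        intro a ha
        have ha' : ‖a‖ ≤ r := by rwa [← mem_closedBall_zero_iff]
        show -a ∈ Metric.closedBall 0 r
        rw [mem_closedBall_zero_iff, norm_neg]
        exact ha' } with hΛ₀def
  have hmemΛ₀ : ∀ ξ : Fin n → ℚ_[p], ξ ∈ Λ₀ ↔ ‖ξ‖ ≤ r := fun ξ => by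
    show ξ ∈ Metric.closedBall 0 r ↔ _
    exact mem_closedBall_zero_iff
  have hcoe : (Λ₀ : Set (Fin n → ℚ_[p])) = Metric.closedBall 0 r := rfl
  have hcomp : IsCompact (Λ₀ : Set (Fin n → ℚ_[p])) := by
    rw [hcoe]; exact isCompact_closedBall 0 r
  have hopen : IsOpen (Λ₀ : Set (Fin n → ℚ_[p])) := by
    rw [hcoe]
    have heq : Metric.closedBall (0 : Fin n → ℚ_[p]) r =
        ⋂ i, (fun ξ : Fin n → ℚ_[p] => ξ i) ⁻¹' Metric.closedBall 0 r := by
      ext ξ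
      simp only [Set.mem_iInter, Set.mem_preimage, mem_closedBall_zero_iff]
      exact pi_norm_le_iff_of_nonneg hrpos.le
    rw [heq]
    exact isOpen_iInter_of_finite fun i =>
      (IsUltrametricDist.isOpen_closedBall _ hrpos.ne').preimage (continuous_apply i)
  have hint : ∀ s : Set (Fin n → ℚ_[p]), IsCompact s → IntegrableOn f s μ :=
    fun s hs => hfc.continuousOn.integrableOn_compact hs
  refine ⟨Λ₀, hcomp, hopen, hint _ hcomp, ?_⟩
  intro Λ hΛc hΛo hle
  refine ⟨hint _ hΛc, ?_⟩
  have hsub : (Λ₀ : Set (Fin n → ℚ_[p])) ⊆ (Λ : Set (Fin n → ℚ_[p])) := fun z hz => hle hz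
  set S : Set (Fin n → ℚ_[p]) := (Λ : Set (Fin n → ℚ_[p])) \ (Λ₀ : Set (Fin n → ℚ_[p])) with hS
  have hSm : MeasurableSet S :=
    hΛo.measurableSet.diff (by rw [hcoe]; exact measurableSet_closedBall)
  have hunion : (Λ₀ : Set (Fin n → ℚ_[p])) ∪ S = (Λ : Set (Fin n → ℚ_[p])) :=
    Set.union_diff_cancel hsub
  have hint₀ : IntegrableOn f (Λ₀ : Set (Fin n → ℚ_[p])) μ := hint _ hcomp
  have hintS : IntegrableOn f S μ := (hint _ hΛc).mono_set Set.diff_subset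
  have hη₀Λ₀ : η₀ ∈ Λ₀ := (hmemΛ₀ η₀).mpr hη₀r
  have hpre : (fun ζ : Fin n → ℚ_[p] => ζ + η₀) ⁻¹' S = S := by
    ext ζ
    simp only [Set.mem_preimage, hS, Set.mem_diff, SetLike.mem_coe]
    constructor
    · rintro ⟨h1, h2⟩
      refine ⟨?_, fun hc => h2 (AddSubgroup.add_mem Λ₀ hc hη₀Λ₀)⟩
      have := AddSubgroup.sub_mem Λ h1 (hle hη₀Λ₀)
      simpa using this
    · rintro ⟨h1, h2⟩
      refine ⟨AddSubgroup.add_mem Λ h1 (hle hη₀Λ₀), fun hc => h2 ?_⟩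
      have := AddSubgroup.sub_mem Λ₀ hc hη₀Λ₀
      simpa using this
  have hJ1 : ∫ ξ in S, f ξ ∂μ = ∫ ξ in S, f (ξ + η₀) ∂μ := by
    conv_lhs => rw [← (measurePreserving_add_right μ η₀).setIntegral_preimage_emb
      (measurableEmbedding_addRight η₀) f S]
    rw [hpre]
  have hJ2 : ∀ ξ ∈ S, f (ξ + η₀) = ψ y * f ξ := by
    intro ξ hξS
    have hξΛ₀ : ¬ ‖ξ‖ ≤ r := fun hc => hξS.2 ((hmemΛ₀ ξ).mpr hc)
    push_neg at hξΛ₀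
    have hξ0 : ξ ≠ 0 := by
      intro h; rw [h, norm_zero] at hξΛ₀; exact absurd hξΛ₀ (not_lt.mpr hrpos.le)
    have hφeq : φ (ξ + η₀) = φ ξ :=
      hinv ξ η₀ hξ0
        (le_trans hη₀εr (mul_le_mul_of_nonneg_left hξΛ₀.le εpos.le))
        (lt_of_le_of_lt hη₀r hξΛ₀)
    show ψ (∑ i, (ξ + η₀) i * x i) * φ (ξ + η₀) = ψ y * (ψ (∑ i, ξ i * x i) * φ ξ)
    have hsum : ∑ i, (ξ + η₀) i * x i = (∑ i, ξ i * x i) + y := by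
      rw [← hsum₀, ← Finset.sum_add_distrib]
      exact Finset.sum_congr rfl fun i _ => by rw [Pi.add_apply, add_mul]
    rw [hsum, ψadd, hφeq]; ring
  have hJ3 : ∫ ξ in S, f ξ ∂μ = ψ y * ∫ ξ in S, f ξ ∂μ := by
    conv_lhs => rw [hJ1, setIntegral_congr_fun hSm hJ2]
    rw [integral_const_mul]
  have hJ0 : ∫ ξ in S, f ξ ∂μ = 0 := by
    rcases mul_eq_zero.mp (show (ψ y - 1) * ∫ ξ in S, f ξ ∂μ = 0 by
      linear_combination -hJ3) with h | h
    · exact absurd (sub_eq_zero.mp h) hyne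
    · exact h
  show ∫ ξ in (Λ : Set (Fin n → ℚ_[p])), f ξ ∂μ = ∫ ξ in (Λ₀ : Set (Fin n → ℚ_[p])), f ξ ∂μ
  rw [← hunion, setIntegral_union Set.disjoint_sdiff_right hSm hint₀ hintS, hJ0, add_zero]
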